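/- Let p ≥ 3 be prime, B : ℕ × ℕ → ℤ satisfy Jenkins' identity (as above), and suppose (D/p) = 1. Then for all n ≥ 1: B(D, p^{2n}d) = pⁿB(p^{2n}D, d) − Σ_{k=0}^{n-1} p^{k+1}B(p^{2k}D, d/p²) + Σ_{k=0}^{n-1} (1 − (−d/p))p^k B(p^{2k}D, d). Consequently the sequence n ↦ B(D, p^{2n}d) converges in ℤ_p, and if additionally (−d/p) = 1 and p² ∤ d then B(D, p^{2n}d) = pⁿ B(p^{2n}D, d), so the p-adic limit is 0. -/

import Mathlib

open Filter Finset

/-- Jenkins' identity for the traces of singular moduli `B(D,d)`, with the convention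
that `B(a,b) = 0` for invalid arguments. -/
def JenkinsId (p : ℕ) [Fact p.Prime] (B : ℕ → ℕ → ℤ) : Prop :=
  ∀ D d n : ℕ, 1 ≤ n →
    B D (p ^ (2 * n) * d) =
      (p : ℤ) ^ n * B (p ^ (2 * n) * D) d
        + ∑ k ∈ range n, (legendreSym p (D : ℤ)) ^ (n - k - 1) *
            ((if p ^ 2 ∣ D then B (D / p ^ 2) (p ^ (2 * k) * d) else 0)
              - (p : ℤ) ^ (k + 1) *
                (if p ^ 2 ∣ d then B (p ^ (2 * k) * D) (d / p ^ 2) else 0))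
        + ∑ k ∈ range n, (legendreSym p (D : ℤ)) ^ (n - k - 1) *
            ((legendreSym p (D : ℤ) - legendreSym p (-(d : ℤ))) * (p : ℤ) ^ k *
              B (p ^ k * D) d)

lemma J1 (p : ℕ) [Fact p.Prime] (B : ℕ → ℕ → ℤ) (hJ : JenkinsId p B) (D d : ℕ) :
    B D (p ^ 2 * d) =
      (p : ℤ) * B (p ^ 2 * D) d
        + ((if p ^ 2 ∣ D then B (D / p ^ 2) d else 0)
            - (p : ℤ) * (if p ^ 2 ∣ d then B D (d / p ^ 2) else 0))
        + (legendreSym p (D : ℤ) - legendreSym p (-(d : ℤ))) * B D d := by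
  have h := hJ D d 1 le_rfl
  simpa using h

lemma legP (p : ℕ) [Fact p.Prime] (m : ℕ) (hm : 1 ≤ m) (D : ℕ) :
    legendreSym p ((p ^ m * D : ℕ) : ℤ) = 0 := by
  rw [legendreSym.eq_zero_iff]
  push_cast
  rcases Nat.exists_eq_add_of_le hm with ⟨j, rfl⟩
  simp [pow_add, pow_succ, ZMod.natCast_self]

lemma legNegP (p : ℕ) [Fact p.Prime] (m : ℕ) (hm : 1 ≤ m) (d : ℕ) :
    legendreSym p (-((p ^ m * d : ℕ) : ℤ)) = 0 := by
  rw [legendreSym.eq_zero_iff]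
  push_cast
  rcases Nat.exists_eq_add_of_le hm with ⟨j, rfl⟩
  simp [pow_add, pow_succ, ZMod.natCast_self]

lemma lemA (p : ℕ) [Fact p.Prime] (B : ℕ → ℕ → ℤ) (hJ : JenkinsId p B)
    (D d i : ℕ) :
    legendreSym p (-(d : ℤ)) * B (p ^ (i + 3) * D) d
      = legendreSym p (-(d : ℤ)) * B (p ^ (i + 4) * D) d := by
  have hp : 0 < p := (Fact.out : p.Prime).pos
  have hpz : ((p : ℤ)) ≠ 0 := by exact_mod_cast hp.ne'
  have hd1 : p ^ 2 ∣ p ^ (i + 2) * D := dvd_mul_of_dvd_left (pow_dvd_pow p (by omega)) D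
  have hq1 : p ^ (i + 2) * D / p ^ 2 = p ^ i * D := by
    rw [show p ^ (i+2) = p ^ 2 * p ^ i by ring, mul_assoc, Nat.mul_div_cancel_left _ (pow_pos hp 2)]
  have hd2 : p ^ 2 ∣ p ^ (i + 4) * D := dvd_mul_of_dvd_left (pow_dvd_pow p (by omega)) D
  have hq2 : p ^ (i + 4) * D / p ^ 2 = p ^ (i + 2) * D := by
    rw [show p ^ (i+4) = p ^ 2 * p ^ (i+2) by ring, mul_assoc,
      Nat.mul_div_cancel_left _ (pow_pos hp 2)]
  have hdd : p ^ 2 ∣ p ^ 2 * d := dvd_mul_right _ _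
  have hqd : p ^ 2 * d / p ^ 2 = d := Nat.mul_div_cancel_left d (pow_pos hp 2)
  have h2 := hJ (p ^ (i + 2) * D) d 2 (by norm_num)
  rw [legP p (i+2) (by omega) D] at h2
  simp only [Finset.sum_range_succ, Finset.sum_range_one] at h2
  norm_num at h2
  rw [if_pos hd1, hq1,
    show p ^ 4 * (p ^ (i + 2) * D) = p ^ (i + 6) * D by ring,
    show p ^ 2 * (p ^ (i + 2) * D) = p ^ (i + 4) * D by ring,
    show p * (p ^ (i + 2) * D) = p ^ (i + 3) * D by ring] at h2
  rw [show (if p ^ 2 ∣ d then (p:ℤ) ^ 2 * B (p ^ (i + 4) * D) (d / p ^ 2) else 0)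
      = (p:ℤ) ^ 2 * (if p ^ 2 ∣ d then B (p ^ (i + 4) * D) (d / p ^ 2) else 0) by
      split <;> simp] at h2
  have hA := J1 p B hJ (p ^ (i + 2) * D) (p ^ 2 * d)
  rw [legP p (i+2) (by omega) D, legNegP p 2 (by norm_num) d, if_pos hd1, hq1,
    if_pos hdd, hqd,
    show p ^ 2 * (p ^ 2 * d) = p ^ 4 * d by ring,
    show p ^ 2 * (p ^ (i + 2) * D) = p ^ (i + 4) * D by ring] at hA
  norm_num at hA
  have hB := J1 p B hJ (p ^ (i + 4) * D) d
  rw [legP p (i+4) (by omega) D, if_pos hd2, hq2,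
    show p ^ 2 * (p ^ (i + 4) * D) = p ^ (i + 6) * D by ring] at hB
  refine mul_left_cancel₀ hpz ?_
  linear_combination h2 - hA - (p : ℤ) * hB

lemma lemA' (p : ℕ) [Fact p.Prime] (B : ℕ → ℕ → ℤ) (hJ : JenkinsId p B)
    (D d : ℕ) : ∀ j : ℕ,
    legendreSym p (-(d : ℤ)) * B (p ^ 3 * D) d
      = legendreSym p (-(d : ℤ)) * B (p ^ (j + 3) * D) d := by
  intro j
  induction j with
  | zero => rfl
  | succ j ih =>
    rw [ih, show j + 1 + 3 = j + 4 by omega]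
    exact lemA p B hJ D d j

lemma keyLem (p : ℕ) [Fact p.Prime] (B : ℕ → ℕ → ℤ) (hJ : JenkinsId p B)
    (D d m : ℕ) :
    legendreSym p (-(d : ℤ)) * B (p ^ (m + 2) * D) d
      = legendreSym p (-(d : ℤ)) * B (p ^ (2 * (m + 1)) * D) d := by
  rcases Nat.eq_zero_or_pos m with rfl | hm
  · norm_num
  · have h1 := lemA' p B hJ D d (m - 1)
    have h2 := lemA' p B hJ D d (2 * m - 1)
    rw [show m - 1 + 3 = m + 2 by omega] at h1
    rw [show 2 * m - 1 + 3 = 2 * (m + 1) by omega] at h2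
    rw [← h1, ← h2]

lemma mainId (p : ℕ) [Fact p.Prime] (B : ℕ → ℕ → ℤ) (hJ : JenkinsId p B)
    (D : ℕ) (hD : legendreSym p (D : ℤ) = 1) :
    ∀ d n : ℕ, 1 ≤ n →
        B D (p ^ (2 * n) * d) =
          (p : ℤ) ^ n * B (p ^ (2 * n) * D) d
            - ∑ k ∈ range n, (p : ℤ) ^ (k + 1) *
                (if p ^ 2 ∣ d then B (p ^ (2 * k) * D) (d / p ^ 2) else 0)
            + ∑ k ∈ range n, (1 - legendreSym p (-(d : ℤ))) * (p : ℤ) ^ k *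
                B (p ^ (2 * k) * D) d := by
  have hp : 0 < p := (Fact.out : p.Prime).pos
  have hpD : ¬ p ^ 2 ∣ D := by
    intro h
    have h0 : legendreSym p (D : ℤ) = 0 := by
      rw [legendreSym.eq_zero_iff]
      obtain ⟨c, rfl⟩ := h
      push_cast
      simp [pow_succ, ZMod.natCast_self]
    rw [hD] at h0
    exact one_ne_zero h0
  intro d n hn
  induction n, hn using Nat.le_induction with
  | base =>
    have h1 := J1 p B hJ D d
    rw [hD, if_neg hpD] at h1
    simp only [Finset.sum_range_one]
    rw [show (2 * 1 : ℕ) = 2 from rfl, show p ^ (2 * 0) * D = D by ring]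
    norm_num
    simp only [mul_ite, mul_zero] at h1 ⊢
    linear_combination h1
  | succ n hn ih =>
    obtain ⟨m, rfl⟩ : ∃ m, n = m + 1 := ⟨n - 1, by omega⟩
    -- hs : expand B D (p^(2*(m+2)) * d) one step
    have hs := J1 p B hJ D (p ^ (2 * (m + 1)) * d)
    rw [hD, if_neg hpD, legNegP p (2 * (m + 1)) (by omega) d,
      if_pos (dvd_mul_of_dvd_left (pow_dvd_pow p (by omega : 2 ≤ 2 * (m + 1))) d),
      show p ^ (2 * (m + 1)) * d / p ^ 2 = p ^ (2 * m) * d by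
        rw [show p ^ (2 * (m+1)) = p ^ 2 * p ^ (2 * m) by ring, mul_assoc,
          Nat.mul_div_cancel_left _ (pow_pos hp 2)],
      show p ^ 2 * (p ^ (2 * (m + 1)) * d) = p ^ (2 * (m + 2)) * d by ring] at hs
    -- hmid : expand B (p^2*D) (p^(2*(m+1))*d) via hJ at level m+1
    have hsum : ∀ X : ℕ → ℤ,
        ∑ k ∈ range (m + 1), (0 : ℤ) ^ (m + 1 - k - 1) * X k = X m := by
      intro X
      rw [Finset.sum_eq_single m]
      · rw [show m + 1 - m - 1 = 0 by omega, pow_zero, one_mul]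
      · intro b hb hbm
        rw [zero_pow (by simp at hb; omega), zero_mul]
      · intro h
        exact absurd (self_mem_range_succ m) h
    have hmid := hJ (p ^ 2 * D) d (m + 1) (by omega)
    rw [legP p 2 (by omega) D, hsum, hsum,
      if_pos (dvd_mul_right (p ^ 2) D),
      Nat.mul_div_cancel_left D (pow_pos hp 2),
      show p ^ (2 * (m + 1)) * (p ^ 2 * D) = p ^ (2 * (m + 2)) * D by ring,
      show p ^ (2 * m) * (p ^ 2 * D) = p ^ (2 * (m + 1)) * D by ring,
      show p ^ m * (p ^ 2 * D) = p ^ (m + 2) * D by ring] at hmid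
    have hkey := keyLem p B hJ D d m
    rw [Finset.sum_range_succ (fun k => (p : ℤ) ^ (k + 1) *
        (if p ^ 2 ∣ d then B (p ^ (2 * k) * D) (d / p ^ 2) else 0)) (m + 1),
      Finset.sum_range_succ (fun k => (1 - legendreSym p (-(d : ℤ))) * (p : ℤ) ^ k *
        B (p ^ (2 * k) * D) d) (m + 1)]
    linear_combination hs + (p : ℤ) * hmid + ih - (p : ℤ) ^ (m + 1) * hkey

lemma normBound (p : ℕ) [Fact p.Prime] (n : ℕ) (x c : ℤ) (h : x = (p:ℤ)^n * c) :
    ‖((x : ℤ) : ℚ_[p])‖ ≤ ((p : ℝ)⁻¹) ^ n := by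
  subst h
  push_cast
  rw [norm_mul, norm_pow, Padic.norm_p]
  calc ((p:ℝ)⁻¹) ^ n * ‖((c : ℤ) : ℚ_[p])‖ ≤ ((p:ℝ)⁻¹) ^ n * 1 := by
        gcongr
        exact Padic.norm_int_le_one c
    _ = ((p:ℝ)⁻¹) ^ n := mul_one _

lemma conv (p : ℕ) [Fact p.Prime] (hp3 : 3 ≤ p) (B : ℕ → ℕ → ℤ) (hJ : JenkinsId p B)
    (D : ℕ) (hD : legendreSym p (D : ℤ) = 1) (d : ℕ) :
    ∃ L : ℚ_[p],
      Tendsto (fun n : ℕ => ((B D (p ^ (2 * n) * d) : ℤ) : ℚ_[p])) atTop (nhds L) := by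
  have hp1 : (1 : ℝ) < p := by exact_mod_cast (by omega : 1 < p)
  have hdiff : ∀ n : ℕ, 1 ≤ n →
      B D (p ^ (2 * (n + 1)) * d) - B D (p ^ (2 * n) * d) =
        (p:ℤ) ^ n * ((p:ℤ) * B (p ^ (2 * (n+1)) * D) d
          - (p:ℤ) * (if p ^ 2 ∣ d then B (p ^ (2 * n) * D) (d / p ^ 2) else 0)
          - legendreSym p (-(d : ℤ)) * B (p ^ (2 * n) * D) d) := by
    intro n hn
    have t1 := mainId p B hJ D hD d n hn
    have t2 := mainId p B hJ D hD d (n + 1) (by omega)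
    rw [Finset.sum_range_succ, Finset.sum_range_succ] at t2
    linear_combination t2 - t1
  set a : ℕ → ℚ_[p] := fun n => ((B D (p ^ (2 * n) * d) : ℤ) : ℚ_[p]) with ha
  set K : ℝ := max (dist (a 0) (a 1)) 1 with hK
  have hb : ∀ n : ℕ, dist (a n) (a (n + 1)) ≤ K * ((p:ℝ)⁻¹) ^ n := by
    intro n
    rcases Nat.eq_zero_or_pos n with rfl | hn
    · have := le_max_left (dist (a 0) (a 1)) 1
      simpa [hK] using this
    · have h1 : dist (a n) (a (n + 1)) ≤ ((p:ℝ)⁻¹) ^ n := by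
        rw [dist_eq_norm, ha]
        have : ((B D (p ^ (2 * n) * d) : ℤ) : ℚ_[p]) - ((B D (p ^ (2 * (n+1)) * d) : ℤ) : ℚ_[p])
            = (((B D (p ^ (2 * n) * d) - B D (p ^ (2 * (n+1)) * d) : ℤ)) : ℚ_[p]) := by push_cast; ring
        rw [this]
        exact normBound p n _
          (-((p:ℤ) * B (p ^ (2 * (n+1)) * D) d
            - (p:ℤ) * (if p ^ 2 ∣ d then B (p ^ (2 * n) * D) (d / p ^ 2) else 0)
            - legendreSym p (-(d : ℤ)) * B (p ^ (2 * n) * D) d))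
          (by linear_combination -(hdiff n hn))
      calc dist (a n) (a (n+1)) ≤ ((p:ℝ)⁻¹) ^ n := h1
        _ ≤ K * ((p:ℝ)⁻¹) ^ n := by
            nlinarith [pow_nonneg (inv_nonneg.2 (by positivity : (0:ℝ) ≤ p)) n,
              le_max_right (dist (a 0) (a 1)) 1]
  have hsum : Summable (fun n : ℕ => K * ((p:ℝ)⁻¹) ^ n) :=
    (summable_geometric_of_lt_one (by positivity) (inv_lt_one_of_one_lt₀ hp1)).mul_left K
  exact cauchySeq_tendsto_of_complete (cauchySeq_of_dist_le_of_summable _ hb hsum)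

/-- If `(D/p) = 1` then Jenkins' identity simplifies, the sequence `B(D, p^{2n}d)`
converges `p`-adically, and if moreover `(−d/p) = 1` and `p² ∤ d` then
`B(D, p^{2n}d) = pⁿ B(p^{2n}D, d)`, so the `p`-adic limit is `0`. -/
theorem jenkins_legendre_D_eq_one (p : ℕ) [Fact p.Prime] (hp3 : 3 ≤ p)
    (B : ℕ → ℕ → ℤ) (hJ : JenkinsId p B) (D : ℕ) (hD : legendreSym p (D : ℤ) = 1) :
    (∀ d n : ℕ, 1 ≤ n →
        B D (p ^ (2 * n) * d) =
          (p : ℤ) ^ n * B (p ^ (2 * n) * D) d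
            - ∑ k ∈ range n, (p : ℤ) ^ (k + 1) *
                (if p ^ 2 ∣ d then B (p ^ (2 * k) * D) (d / p ^ 2) else 0)
            + ∑ k ∈ range n, (1 - legendreSym p (-(d : ℤ))) * (p : ℤ) ^ k *
                B (p ^ (2 * k) * D) d) ∧
      (∀ d : ℕ, ∃ L : ℚ_[p],
        Tendsto (fun n : ℕ => ((B D (p ^ (2 * n) * d) : ℤ) : ℚ_[p])) atTop (nhds L)) ∧
      (∀ d : ℕ, legendreSym p (-(d : ℤ)) = 1 → ¬ p ^ 2 ∣ d →
        (∀ n : ℕ, 1 ≤ n →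
            B D (p ^ (2 * n) * d) = (p : ℤ) ^ n * B (p ^ (2 * n) * D) d) ∧
          Tendsto (fun n : ℕ => ((B D (p ^ (2 * n) * d) : ℤ) : ℚ_[p])) atTop (nhds 0)) := by
  have hp1 : (1 : ℝ) < p := by exact_mod_cast (by omega : 1 < p)
  refine ⟨mainId p B hJ D hD, fun d => conv p hp3 B hJ D hD d, fun d hμ hnd => ?_⟩
  have hi : ∀ n : ℕ, 1 ≤ n →
      B D (p ^ (2 * n) * d) = (p : ℤ) ^ n * B (p ^ (2 * n) * D) d := by
    intro n hn
    have t := mainId p B hJ D hD d n hn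
    rw [hμ] at t
    simpa [hnd] using t
  refine ⟨hi, ?_⟩
  refine squeeze_zero_norm' (f := fun n : ℕ => ((B D (p ^ (2 * n) * d) : ℤ) : ℚ_[p]))
    (a := fun n : ℕ => ((p : ℝ)⁻¹) ^ n) ?_ ?_
  · filter_upwards [Filter.eventually_ge_atTop 1] with n hn
    exact normBound p n _ _ (hi n hn)
  · exact tendsto_pow_atTop_nhds_zero_of_lt_one (by positivity)
      (inv_lt_one_of_one_lt₀ hp1)
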